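/- For each integer k ≥ 1 and real E with 2^k·E not an integer, the QPE kernel f_k(E) = (1/2^(2k)) · sin²(π·2^k·E)/sin²(π·E) satisfies 0 ≤ f_k(E) ≤ 1; moreover, summing over the shifted arguments, ∑_{x=0}^{2^k − 1} (1/2^(2k)) · sin²(π·2^k·E)/sin²(π·(E − x/2^k)) = 1 for every real E with 2^k·E ∉ ℤ. -/

import Mathlib

open Complex Finset
open scoped Real

lemma L1 (α : ℝ) : ‖Complex.exp (α * Complex.I) - 1‖ = 2 * |Real.sin (α/2)| := by
  have h : Complex.exp (α * Complex.I) - 1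
      = ↑(Real.cos α - 1) + ↑(Real.sin α) * Complex.I := by
    rw [Complex.exp_mul_I, ← Complex.ofReal_cos, ← Complex.ofReal_sin]
    push_cast; ring
  rw [h, Complex.norm_add_mul_I]
  have key : (Real.cos α - 1)^2 + Real.sin α ^2 = (2 * |Real.sin (α/2)|)^2 := by
    have h1 : Real.sin (α/2)^2 = 1/2 - Real.cos (2*(α/2))/2 := Real.sin_sq_eq_half_sub _
    rw [show 2*(α/2) = α by ring] at h1
    have h2 : Real.sin α ^2 + Real.cos α ^2 = 1 := Real.sin_sq_add_cos_sq α
    have h3 : |Real.sin (α/2)|^2 = Real.sin (α/2)^2 := sq_abs _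
    nlinarith
  rw [key, Real.sqrt_sq (by positivity)]

lemma expne (θ : ℝ) (h : Real.sin (Real.pi * θ) ≠ 0) :
    Complex.exp (2 * Real.pi * θ * Complex.I) ≠ 1 := by
  intro hc
  rw [Complex.exp_eq_one_iff] at hc
  obtain ⟨n, hn⟩ := hc
  have h2 : (2 * (Real.pi:ℂ) * Complex.I) ≠ 0 := by
    simp [Real.pi_ne_zero, Complex.I_ne_zero]
  have ha : (2 * (Real.pi:ℂ) * Complex.I) * (θ:ℂ)
      = (2 * (Real.pi:ℂ) * Complex.I) * (n:ℂ) := by linear_combination hn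
  have := mul_left_cancel₀ h2 ha
  have hθ : θ = (n : ℝ) := by exact_mod_cast this
  apply h
  rw [hθ, mul_comm]
  exact Real.sin_int_mul_pi n

lemma L2 (θ : ℝ) (h : Real.sin (Real.pi * θ) ≠ 0) (N : ℕ) :
    ‖∑ j ∈ Finset.range N, Complex.exp (2 * Real.pi * θ * Complex.I) ^ j‖ ^ 2
      = Real.sin (Real.pi * N * θ) ^ 2 / Real.sin (Real.pi * θ) ^ 2 := by
  have hw := expne θ h
  rw [geom_sum_eq hw]
  have hpow : Complex.exp (2 * Real.pi * θ * Complex.I) ^ N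
      = Complex.exp (((2 * Real.pi * N * θ : ℝ)) * Complex.I) := by
    rw [← Complex.exp_nat_mul]
    push_cast
    ring_nf
  have h1 : (Complex.exp (2 * Real.pi * θ * Complex.I) : ℂ)
      = Complex.exp (((2 * Real.pi * θ : ℝ)) * Complex.I) := by push_cast; ring_nf
  rw [hpow, h1, norm_div, L1, L1, div_pow, mul_pow, mul_pow, _root_.sq_abs, _root_.sq_abs]
  have e1 : 2 * Real.pi * (N:ℝ) * θ / 2 = Real.pi * N * θ := by ring
  have e2 : 2 * Real.pi * θ / 2 = Real.pi * θ := by ring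
  rw [e1, e2, mul_div_mul_left]
  norm_num

lemma L3 (N : ℕ) (hN : 0 < N) (a u : ℂ) (ha : a * (starRingEnd ℂ) a = 1)
    (hu : u * (starRingEnd ℂ) u = 1) (huN : u ^ N = 1)
    (hprim : ∀ j j' : ℕ, j < N → j' < N → u ^ j = u ^ j' → j = j') :
    ∑ x ∈ Finset.range N, ((∑ j ∈ Finset.range N, a ^ j * u ^ (x * j)) *
      (starRingEnd ℂ) (∑ j ∈ Finset.range N, a ^ j * u ^ (x * j))) = (N : ℂ) ^ 2 := by
  have hu0 : u ≠ 0 := by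
    intro h0; rw [h0, zero_pow hN.ne'] at huN; exact zero_ne_one huN
  have hconj : (starRingEnd ℂ) u = u⁻¹ := by
    field_simp at hu ⊢; linear_combination hu
  have expand : ∀ x : ℕ, ((∑ j ∈ Finset.range N, a ^ j * u ^ (x * j)) *
      (starRingEnd ℂ) (∑ j ∈ Finset.range N, a ^ j * u ^ (x * j)))
      = ∑ j ∈ Finset.range N, ∑ j' ∈ Finset.range N,
          (a ^ j * (starRingEnd ℂ) a ^ j') * (u ^ j * ((starRingEnd ℂ) u) ^ j') ^ x := by
    intro x
    rw [map_sum, Finset.sum_mul_sum]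
    refine Finset.sum_congr rfl fun j _ => Finset.sum_congr rfl fun j' _ => ?_
    rw [map_mul, map_pow, map_pow]
    rw [mul_pow, ← pow_mul, ← pow_mul, mul_comm j x, mul_comm j' x]
    ring
  rw [Finset.sum_congr rfl fun x _ => expand x]
  rw [Finset.sum_comm]
  have swap2 : ∀ j : ℕ, ∑ x ∈ Finset.range N, ∑ j' ∈ Finset.range N,
      (a ^ j * (starRingEnd ℂ) a ^ j') * (u ^ j * ((starRingEnd ℂ) u) ^ j') ^ x
      = ∑ j' ∈ Finset.range N, (a ^ j * (starRingEnd ℂ) a ^ j') *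
          ∑ x ∈ Finset.range N, (u ^ j * ((starRingEnd ℂ) u) ^ j') ^ x := by
    intro j
    rw [Finset.sum_comm]
    exact Finset.sum_congr rfl fun j' _ => by rw [Finset.mul_sum]
  rw [Finset.sum_congr rfl fun j _ => swap2 j]
  have inner : ∀ j ∈ Finset.range N, ∑ j' ∈ Finset.range N,
      (a ^ j * (starRingEnd ℂ) a ^ j') *
        ∑ x ∈ Finset.range N, (u ^ j * ((starRingEnd ℂ) u) ^ j') ^ x = (N : ℂ) := by
    intro j hj
    rw [Finset.mem_range] at hj
    rw [Finset.sum_eq_single_of_mem j (Finset.mem_range.2 hj)]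
    · have h1 : u ^ j * ((starRingEnd ℂ) u) ^ j = 1 := by
        rw [← mul_pow, hu, one_pow]
      rw [h1]
      simp only [one_pow, Finset.sum_const, Finset.card_range, nsmul_eq_mul, mul_one]
      have h2 : a ^ j * (starRingEnd ℂ) a ^ j = 1 := by
        rw [← mul_pow, ha, one_pow]
      rw [h2, one_mul]
    · intro j' hj' hne
      rw [Finset.mem_range] at hj'
      have hv1 : u ^ j * ((starRingEnd ℂ) u) ^ j' ≠ 1 := by
        rw [hconj, inv_pow]
        intro hc
        have : u ^ j = u ^ j' := by
          field_simp at hc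
          exact hc
        exact (Ne.symm hne) (hprim j j' hj hj' this)
      have hvN : (u ^ j * ((starRingEnd ℂ) u) ^ j') ^ N = 1 := by
        rw [mul_pow, ← pow_mul, mul_comm j N, pow_mul, huN, one_pow, one_mul,
          ← map_pow, ← map_pow, ← pow_mul, mul_comm j' N, pow_mul, huN, one_pow, map_one]
      rw [geom_sum_eq hv1, hvN, sub_self, zero_div, mul_zero]
  rw [Finset.sum_congr rfl inner]
  simp [sq]

lemma sinsq (b : ℝ) (n : ℕ) : Real.sin (b - n * Real.pi) ^ 2 = Real.sin b ^ 2 := by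
  induction n with
  | zero => simp
  | succ m ih =>
    have h : b - (m+1 : ℕ) * Real.pi = (b - m * Real.pi) - Real.pi := by push_cast; ring
    rw [h, Real.sin_sub_pi, neg_sq, ih]

/-- The QPE kernel `f_k(E) = sin²(π·2^k·E) / (2^(2k)·sin²(π·E))` lies in `[0,1]`,
and the kernel summed over all `2^k` shifted outcomes equals `1`. -/
theorem stmt8 (k : ℕ) (hk : 1 ≤ k) (E : ℝ) (hE : ∀ n : ℤ, (2 : ℝ) ^ k * E ≠ n) :
    (0 ≤ (1 / 2 ^ (2 * k)) * Real.sin (Real.pi * 2 ^ k * E) ^ 2 /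
        Real.sin (Real.pi * E) ^ 2 ∧
      (1 / 2 ^ (2 * k)) * Real.sin (Real.pi * 2 ^ k * E) ^ 2 /
        Real.sin (Real.pi * E) ^ 2 ≤ 1) ∧
    ∑ x ∈ Finset.range (2 ^ k),
        (1 / 2 ^ (2 * k)) * Real.sin (Real.pi * 2 ^ k * E) ^ 2 /
          Real.sin (Real.pi * (E - x / 2 ^ k)) ^ 2 = 1 := by
  set N : ℕ := 2 ^ k with hNdef
  have h2k : ((2:ℝ))^k = ((N : ℕ) : ℝ) := by norm_cast
  have hNpos : 0 < N := pow_pos (by norm_num) k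
  have hNne : ((N:ℕ) : ℝ) ≠ 0 := by positivity
  have hπ := Real.pi_ne_zero
  -- sin nonzero at shifted points
  have hsin : ∀ x : ℕ, Real.sin (Real.pi * (E - x / 2^k)) ≠ 0 := by
    intro x hzero
    rw [Real.sin_eq_zero_iff] at hzero
    obtain ⟨n, hn⟩ := hzero
    have hE' : E = n + x / 2^k := by
      have hn' : Real.pi * (n:ℝ) = Real.pi * (E - x/2^k) := by linarith
      have h1 := mul_left_cancel₀ hπ hn'
      linarith
    apply hE ((x : ℤ) + 2^k * n)
    rw [hE']
    have h2 : (2:ℝ)^k ≠ 0 := by positivity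
    push_cast
    field_simp
    ring
  have hsinE : Real.sin (Real.pi * E) ≠ 0 := by
    have := hsin 0; simpa using this
  have hpow2k : (2:ℝ)^(2*k) = ((N:ℕ):ℝ)^2 := by
    rw [two_mul, pow_add, h2k]; ring
  -- Part 1
  refine ⟨⟨by positivity, ?_⟩, ?_⟩
  · -- upper bound
    have hL2 := L2 E hsinE N
    have hnorm1 : ‖Complex.exp (2 * Real.pi * E * Complex.I)‖ = 1 := by
      rw [show (2 * (Real.pi:ℂ) * (E:ℂ)) = ((2*Real.pi*E : ℝ) : ℂ) by push_cast; ring]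
      exact Complex.norm_exp_ofReal_mul_I _
    have hb : ‖∑ j ∈ Finset.range N, Complex.exp (2 * Real.pi * E * Complex.I) ^ j‖ ≤ (N:ℝ) := by
      calc ‖∑ j ∈ Finset.range N, Complex.exp (2 * Real.pi * E * Complex.I) ^ j‖
          ≤ ∑ j ∈ Finset.range N, ‖Complex.exp (2 * Real.pi * E * Complex.I) ^ j‖ :=
            norm_sum_le _ _
        _ = ∑ j ∈ Finset.range N, (1:ℝ) := by
            refine Finset.sum_congr rfl fun j _ => ?_
            rw [norm_pow, hnorm1, one_pow]
        _ = (N:ℝ) := by simp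
    have key : Real.sin (Real.pi * N * E) ^ 2 / Real.sin (Real.pi * E) ^ 2 ≤ ((N:ℕ):ℝ)^2 := by
      rw [← hL2]
      exact pow_le_pow_left₀ (norm_nonneg _) hb 2
    rw [show Real.pi * 2^k * E = Real.pi * (N:ℝ) * E by rw [h2k]]
    have hexpr : (1 / 2 ^ (2*k)) * Real.sin (Real.pi * (N:ℝ) * E) ^ 2 /
        Real.sin (Real.pi * E) ^ 2
        = (Real.sin (Real.pi * (N:ℝ) * E) ^ 2 / Real.sin (Real.pi * E) ^ 2) / ((N:ℕ):ℝ)^2 := by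
      rw [hpow2k]; ring
    rw [hexpr]
    rw [div_le_one (by positivity)]
    exact key
  · -- Part 2
    set a : ℂ := Complex.exp (((2*Real.pi*E : ℝ) : ℂ) * Complex.I) with hadef
    set u : ℂ := Complex.exp (((-(2*Real.pi/N) : ℝ) : ℂ) * Complex.I) with hudef
    have ha : a * (starRingEnd ℂ) a = 1 := by
      rw [Complex.mul_conj, Complex.normSq_eq_norm_sq, Complex.norm_exp_ofReal_mul_I]
      norm_num
    have hu : u * (starRingEnd ℂ) u = 1 := by
      rw [Complex.mul_conj, Complex.normSq_eq_norm_sq, Complex.norm_exp_ofReal_mul_I]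
      norm_num
    have hNc : ((N:ℕ):ℂ) ≠ 0 := by exact_mod_cast hNne
    have hπc : ((Real.pi:ℝ):ℂ) ≠ 0 := by exact_mod_cast hπ
    have huN : u ^ N = 1 := by
      rw [hudef, ← Complex.exp_nat_mul]
      refine Complex.exp_eq_one_iff.mpr ⟨-1, ?_⟩
      push_cast
      field_simp
    have hprim : ∀ j j' : ℕ, j < N → j' < N → u ^ j = u ^ j' → j = j' := by
      intro j j' hj hj' hjj'
      rw [hudef, ← Complex.exp_nat_mul, ← Complex.exp_nat_mul,
        Complex.exp_eq_exp_iff_exists_int] at hjj'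
      obtain ⟨n, hn⟩ := hjj'
      have hIc : Complex.I ≠ 0 := Complex.I_ne_zero
      have hfac : (2 * (Real.pi:ℂ) * Complex.I * ((N:ℕ):ℂ)) ≠ 0 := by
        simp [hπc, hIc, hNc]
      have key : ((j':ℂ) - j) = (n:ℂ) * N := by
        push_cast at hn
        have key' : ((j':ℂ) - (j:ℂ)) * (2 * (Real.pi:ℂ) * Complex.I * ((N:ℕ):ℂ))
            = ((n:ℂ) * ((N:ℕ):ℂ)) * (2 * (Real.pi:ℂ) * Complex.I * ((N:ℕ):ℂ)) := by
          field_simp at hn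
          linear_combination (2 * (Real.pi:ℂ) * Complex.I * ((N:ℕ):ℂ)) * hn
        exact mul_right_cancel₀ hfac key'
      have hz : (j':ℤ) - j = n * N := by exact_mod_cast key
      have hNZ : (0:ℤ) < (N:ℤ) := by exact_mod_cast hNpos
      have hj1 : (j':ℤ) < N := by exact_mod_cast hj'
      have hj2 : (j:ℤ) < N := by exact_mod_cast hj
      have hj0 : (0:ℤ) ≤ (j':ℤ) := Int.natCast_nonneg _
      have hj0' : (0:ℤ) ≤ (j:ℤ) := Int.natCast_nonneg _
      have hn0 : n = 0 := by
        rcases lt_trichotomy n 0 with h | h | h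
        · have : n * N ≤ (-1) * N := mul_le_mul_of_nonneg_right (by omega) (le_of_lt hNZ)
          linarith
        · exact h
        · have : (1:ℤ) * N ≤ n * N := mul_le_mul_of_nonneg_right (by omega) (le_of_lt hNZ)
          linarith
      rw [hn0, zero_mul] at hz
      omega
    have hgx : ∀ x : ℕ, ∑ j ∈ Finset.range N,
        Complex.exp (2 * Real.pi * ((E - x/2^k : ℝ):ℂ) * Complex.I) ^ j
        = ∑ j ∈ Finset.range N, a ^ j * u ^ (x * j) := by
      intro x
      refine Finset.sum_congr rfl fun j _ => ?_
      have hbase : Complex.exp (2 * Real.pi * ((E - x/2^k : ℝ):ℂ) * Complex.I) = a * u ^ x := by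
        rw [hadef, hudef, ← Complex.exp_nat_mul, ← Complex.exp_add]
        congr 1
        push_cast [h2k]
        field_simp
        ring
      rw [hbase, mul_pow, ← pow_mul]
    -- each term
    have hterm : ∀ x ∈ Finset.range N,
        (1 / 2 ^ (2*k)) * Real.sin (Real.pi * 2^k * E) ^ 2 /
          Real.sin (Real.pi * (E - x / 2^k)) ^ 2
        = (1 / ((N:ℕ):ℝ)^2) * ‖∑ j ∈ Finset.range N, a ^ j * u ^ (x * j)‖^2 := by
      intro x hx
      rw [← hgx x]
      have hL2x := L2 (E - x/2^k) (hsin x) N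
      rw [hL2x]
      have hsq : Real.sin (Real.pi * (N:ℝ) * (E - x/2^k)) ^ 2
          = Real.sin (Real.pi * 2^k * E) ^ 2 := by
        have harg : Real.pi * (N:ℝ) * (E - x/2^k) = Real.pi * (N:ℝ) * E - x * Real.pi := by
          rw [← h2k]; field_simp
        rw [harg, sinsq, h2k]
      rw [hsq, hpow2k]
      ring
    rw [Finset.sum_congr rfl hterm]
    -- Plancherel
    have hC := L3 N hNpos a u ha hu huN hprim
    have hP : ∑ x ∈ Finset.range N, ‖∑ j ∈ Finset.range N, a ^ j * u ^ (x*j)‖^2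
        = ((N:ℕ):ℝ)^2 := by
      have hcx : ((∑ x ∈ Finset.range N, ‖∑ j ∈ Finset.range N, a ^ j * u ^ (x*j)‖^2 : ℝ) : ℂ)
          = ((N:ℕ):ℂ)^2 := by
        push_cast
        rw [← hC]
        refine Finset.sum_congr rfl fun x _ => ?_
        rw [Complex.mul_conj, Complex.normSq_eq_norm_sq]
        push_cast
        ring
      exact_mod_cast hcx
    rw [← Finset.mul_sum, hP]
    field_simp
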